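/- Suppose X, Y are complex numbers with Z := max(|X|, |Y|) > 0, that ∏_{j=1}^n |β_j| ≤ c_0 · Z^k, that i is an index (1 ≤ i ≤ n) with |β_i| = min_{1≤j≤n} |β_j|, and that Z ≥ c_{4i}. Then for every j ≠ i (1 ≤ j ≤ n) one has |β_j| ≥ (c_{1ij}/2) · Z. -/

import Mathlib

open Finset

/-- Estimate (15) of the paper: if `Z ≥ c₄ᵢ` then `|βⱼ| ≥ (c₁ᵢⱼ/2) Z` for all `j ≠ i`. -/
theorem stmt2 (n k : ℕ) (hn : 2 ≤ n) (hk : k < n)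
    (α lam : Fin n → ℂ) (hα0 : ∀ j, α j ≠ 0) (hαinj : Function.Injective α)
    (c0 : ℝ) (hc0 : 0 < c0)
    (X Y : ℂ) (Z : ℝ) (hZ : Z = max (‖X‖) (‖Y‖)) (hZpos : 0 < Z)
    (β : Fin n → ℂ) (hβ : ∀ j, β j = X - α j * Y + lam j)
    (hprod : ∏ j, ‖β j‖ ≤ c0 * Z ^ k)
    (i : Fin n)
    (hmin : ‖β i‖
      = (univ : Finset (Fin n)).inf' ⟨i, mem_univ i⟩ (fun j => ‖β j‖))
    (ε : ℝ) (hε0 : 0 < ε) (hε1 : ε < 1)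
    (c1 c2 c3 : Fin n → ℝ)
    (hc1 : ∀ j, c1 j = ‖α j - α i‖ * min 1 (1 / ‖α i‖))
    (hc2 : ∀ j, c2 j = c0 ^ ((1 : ℝ) / n) * max 1 (‖α j‖ / ‖α i‖))
    (hc3 : ∀ j, c3 j = max (‖lam j - lam i‖)
      (‖α i * lam j - α j * lam i‖ / ‖α i‖))
    (hZ4 : (univ.erase i).sup'
        (by
          refine Finset.card_pos.mp ?_
          rw [Finset.card_erase_of_mem (Finset.mem_univ i), Finset.card_univ, Fintype.card_fin]
          omega)
        (fun j => max ((2 * c2 j / (ε * c1 j)) ^ ((n : ℝ) / ((n : ℝ) - (k : ℝ))))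
          (2 * c3 j / ((1 - ε) * c1 j))) ≤ Z) :
    ∀ j, j ≠ i → ‖β j‖ ≥ c1 j / 2 * Z := by
  intro j hji
  have hnR : (0:ℝ) < n := by positivity
  have hnkR : (0:ℝ) < (n:ℝ) - (k:ℝ) := by
    have : (k:ℝ) < n := by exact_mod_cast hk
    linarith
  have ha : 0 < ‖α i‖ := by
    simpa [norm_pos_iff] using hα0 i
  -- positivity of c1 j
  have hd : 0 < ‖α j - α i‖ := by
    rw [norm_pos_iff, sub_ne_zero]
    exact fun h => hji (hαinj h)
  have hm : 0 < min 1 (1 / ‖α i‖) := by positivity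
  have hc1pos : 0 < c1 j := by rw [hc1 j]; positivity
  have hc2pos : 0 < c2 j := by
    rw [hc2 j]
    have : (0:ℝ) < c0 ^ ((1:ℝ)/n) := Real.rpow_pos_of_pos hc0 _
    have h1 : (1:ℝ) ≤ max 1 (‖α j‖ / ‖α i‖) := le_max_left _ _
    nlinarith
  -- extract the two conditions from hZ4
  have hmem : j ∈ univ.erase i := by
    simp [Finset.mem_erase, hji]
  have hle := le_trans (Finset.le_sup' (f := fun j => max ((2 * c2 j / (ε * c1 j)) ^ ((n : ℝ) / ((n : ℝ) - (k : ℝ))))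
          (2 * c3 j / ((1 - ε) * c1 j))) hmem) hZ4
  have h1 : (2 * c2 j / (ε * c1 j)) ^ ((n : ℝ) / ((n : ℝ) - (k : ℝ))) ≤ Z :=
    le_trans (le_max_left _ _) hle
  have h2 : 2 * c3 j / ((1 - ε) * c1 j) ≤ Z := le_trans (le_max_right _ _) hle
  -- bound on |β i| from the product
  have hbi : ∀ l, ‖β i‖ ≤ ‖β l‖ := by
    intro l
    rw [hmin]
    exact Finset.inf'_le _ (mem_univ l)
  have hbin : (‖β i‖) ^ n ≤ c0 * Z ^ k := by
    refine le_trans ?_ hprod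
    calc (‖β i‖) ^ n = ∏ _l : Fin n, ‖β i‖ := by
          simp [Finset.prod_const]
      _ ≤ ∏ l, ‖β l‖ :=
          Finset.prod_le_prod (fun _ _ => (norm_nonneg _)) (fun l _ => hbi l)
  have hbile : ‖β i‖ ≤ c0 ^ ((1:ℝ)/n) * Z ^ ((k:ℝ)/n) := by
    have h0 : (0:ℝ) ≤ ‖β i‖ := norm_nonneg _
    have := Real.rpow_le_rpow (by positivity) hbin (by positivity : (0:ℝ) ≤ 1/n)
    calc ‖β i‖ = ((‖β i‖) ^ n) ^ ((1:ℝ)/(n:ℝ)) := by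
          rw [← Real.rpow_natCast (‖β i‖) n, ← Real.rpow_mul h0]
          rw [mul_one_div, div_self (ne_of_gt hnR), Real.rpow_one]
      _ ≤ (c0 * Z ^ k) ^ ((1:ℝ)/(n:ℝ)) := this
      _ = c0 ^ ((1:ℝ)/n) * Z ^ ((k:ℝ)/n) := by
          rw [Real.mul_rpow (le_of_lt hc0) (by positivity),
            ← Real.rpow_natCast Z k, ← Real.rpow_mul (le_of_lt hZpos), mul_one_div]
  -- condition 1 rephrased
  have hZnk : 2 * c2 j / (ε * c1 j) ≤ Z ^ (((n:ℝ) - (k:ℝ))/(n:ℝ)) := by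
    have hb : (0:ℝ) < 2 * c2 j / (ε * c1 j) := by positivity
    have := Real.rpow_le_rpow (le_of_lt (Real.rpow_pos_of_pos hb _)) h1
      (by positivity : (0:ℝ) ≤ ((n:ℝ) - (k:ℝ))/(n:ℝ))
    rwa [← Real.rpow_mul (le_of_lt hb),
      div_mul_div_comm, mul_comm ((n:ℝ) - (k:ℝ)) (n:ℝ), div_self (by positivity),
      Real.rpow_one] at this
  have hsplit : Z ^ (((n:ℝ) - (k:ℝ))/(n:ℝ)) * Z ^ ((k:ℝ)/(n:ℝ)) = Z := by
    rw [← Real.rpow_add hZpos]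
    have : ((n:ℝ) - (k:ℝ))/(n:ℝ) + (k:ℝ)/(n:ℝ) = 1 := by field_simp; ring
    rw [this, Real.rpow_one]
  have hZk : 0 < Z ^ ((k:ℝ)/(n:ℝ)) := Real.rpow_pos_of_pos hZpos _
  have hstep1 : c2 j * Z ^ ((k:ℝ)/(n:ℝ)) ≤ ε * c1 j / 2 * Z := by
    have h3 : 2 * c2 j ≤ ε * c1 j * Z ^ (((n:ℝ) - (k:ℝ))/(n:ℝ)) := by
      have := (div_le_iff₀ (by positivity : (0:ℝ) < ε * c1 j)).mp hZnk
      linarith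
    calc c2 j * Z ^ ((k:ℝ)/(n:ℝ))
        ≤ (ε * c1 j * Z ^ (((n:ℝ) - (k:ℝ))/(n:ℝ)) / 2) * Z ^ ((k:ℝ)/(n:ℝ)) := by
          apply mul_le_mul_of_nonneg_right _ (le_of_lt hZk)
          linarith
      _ = ε * c1 j / 2 * (Z ^ (((n:ℝ) - (k:ℝ))/(n:ℝ)) * Z ^ ((k:ℝ)/(n:ℝ))) := by ring
      _ = ε * c1 j / 2 * Z := by rw [hsplit]
  -- M and the bound on M * |β i|
  set M : ℝ := max 1 (‖α j‖ / ‖α i‖) with hM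
  have hM1 : (1:ℝ) ≤ M := le_max_left _ _
  have hMbi : M * ‖β i‖ ≤ ε * c1 j / 2 * Z := by
    have : M * ‖β i‖ ≤ M * (c0 ^ ((1:ℝ)/n) * Z ^ ((k:ℝ)/n)) :=
      mul_le_mul_of_nonneg_left hbile (by linarith)
    calc M * ‖β i‖ ≤ M * (c0 ^ ((1:ℝ)/n) * Z ^ ((k:ℝ)/n)) := this
      _ = c2 j * Z ^ ((k:ℝ)/(n:ℝ)) := by rw [hc2 j]; ring
      _ ≤ ε * c1 j / 2 * Z := hstep1
  -- bound on c3
  have hc3le : c3 j ≤ (1 - ε) * c1 j / 2 * Z := by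
    have := (div_le_iff₀ (mul_pos (by linarith : (0:ℝ) < 1 - ε) hc1pos)).mp h2
    linarith
  -- main inequality: c1 j * Z ≤ |β j| + M * |β i| + c3 j
  have hmain : c1 j * Z ≤ ‖β j‖ + M * ‖β i‖ + c3 j := by
    rcases max_cases (‖X‖) (‖Y‖) with ⟨hXY, _⟩ | ⟨hXY, _⟩
    · -- Z = |X|
      have hid : (α i - α j) * X = α i * β j - α j * β i - (α i * lam j - α j * lam i) := by
        rw [hβ j, hβ i]; ring
      have htri : ‖α j - α i‖ * Z
          ≤ ‖α i‖ * ‖β j‖ + ‖α j‖ * ‖β i‖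
            + ‖α i * lam j - α j * lam i‖ := by
        have hZX : Z = ‖X‖ := by rw [hZ, hXY]
        rw [hZX]
        calc ‖α j - α i‖ * ‖X‖
            = ‖(α i - α j) * X‖ := by
              rw [norm_mul, norm_sub_rev (α i) (α j)]
          _ = ‖α i * β j - α j * β i - (α i * lam j - α j * lam i)‖ := by rw [hid]
          _ ≤ ‖α i * β j - α j * β i‖ + ‖α i * lam j - α j * lam i‖ := by
              apply norm_sub_le
          _ ≤ ‖α i‖ * ‖β j‖ + ‖α j‖ * ‖β i‖
              + ‖α i * lam j - α j * lam i‖ := by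
              have := norm_sub_le (α i * β j) (α j * β i)
              simp only [norm_mul] at this
              linarith
      have hac1 : ‖α i‖ * c1 j ≤ ‖α j - α i‖ := by
        rw [hc1 j]
        calc ‖α i‖ * (‖α j - α i‖ * min 1 (1 / ‖α i‖))
            ≤ ‖α i‖ * (‖α j - α i‖ * (1 / ‖α i‖)) := by
              apply mul_le_mul_of_nonneg_left _ ha.le
              exact mul_le_mul_of_nonneg_left (min_le_right _ _) hd.le
          _ = ‖α j - α i‖ := by field_simp
      have haM : ‖α j‖ ≤ ‖α i‖ * M := by
        have h := le_max_right (1:ℝ) (‖α j‖ / ‖α i‖)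
        rw [← hM] at h
        have := mul_le_mul_of_nonneg_left h ha.le
        rwa [mul_div_cancel₀ _ (ne_of_gt ha)] at this
      have hac3 : ‖α i * lam j - α j * lam i‖ ≤ ‖α i‖ * c3 j := by
        have h : ‖α i * lam j - α j * lam i‖ / ‖α i‖ ≤ c3 j := by
          rw [hc3 j]; exact le_max_right _ _
        have := mul_le_mul_of_nonneg_left h ha.le
        rwa [mul_div_cancel₀ _ (ne_of_gt ha)] at this
      have hbi0 : (0:ℝ) ≤ ‖β i‖ := norm_nonneg _
      have key : ‖α i‖ * (c1 j * Z)
          ≤ ‖α i‖ * (‖β j‖ + M * ‖β i‖ + c3 j) := by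
        have t1 := mul_le_mul_of_nonneg_right hac1 hZpos.le
        have t2 := mul_le_mul_of_nonneg_right haM hbi0
        linarith only [t1, t2, htri, hac3]
      exact le_of_mul_le_mul_left key ha
    · -- Z = |Y|
      have hid : (α i - α j) * Y = (β j - β i) - (lam j - lam i) := by
        rw [hβ j, hβ i]; ring
      have htri : ‖α j - α i‖ * ‖Y‖
          ≤ ‖β j‖ + ‖β i‖ + ‖lam j - lam i‖ := by
        calc ‖α j - α i‖ * ‖Y‖
            = ‖(α i - α j) * Y‖ := by
              rw [norm_mul, norm_sub_rev (α i) (α j)]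
          _ = ‖(β j - β i) - (lam j - lam i)‖ := by rw [hid]
          _ ≤ ‖β j - β i‖ + ‖lam j - lam i‖ :=
              norm_sub_le _ _
          _ ≤ ‖β j‖ + ‖β i‖ + ‖lam j - lam i‖ := by
              have := norm_sub_le (β j) (β i)
              linarith
      have hc1le : c1 j ≤ ‖α j - α i‖ := by
        rw [hc1 j]
        calc ‖α j - α i‖ * min 1 (1 / ‖α i‖)
            ≤ ‖α j - α i‖ * 1 :=
              mul_le_mul_of_nonneg_left (min_le_left _ _) hd.le
          _ = ‖α j - α i‖ := mul_one _
      have hc3ge : ‖lam j - lam i‖ ≤ c3 j := by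
        rw [hc3 j]; exact le_max_left _ _
      have hbi0 : (0:ℝ) ≤ ‖β i‖ := norm_nonneg _
      have hZY : Z = ‖Y‖ := by rw [hZ, hXY]
      have htri' : ‖α j - α i‖ * Z
          ≤ ‖β j‖ + ‖β i‖ + ‖lam j - lam i‖ := by
        rw [hZY]; exact htri
      have t1 := mul_le_mul_of_nonneg_right hc1le hZpos.le
      have t2 := mul_le_mul_of_nonneg_right hM1 hbi0
      linarith only [t1, t2, htri', hc3ge]
  linarith only [hmain, hMbi, hc3le]
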